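/- Let f ∈ ℚ[[N^⊕]] be a formal power series with constant term 1 supported on multiples of a fixed primitive γ₀ ∈ N^+, and let ω be a skew-symmetric form on N. Then the map z^γ ↦ f^{ω(γ₀, γ)} · z^γ extends to a well-defined ℚ-algebra automorphism of the completed monoid algebra ℚ[[N^⊕]], where f^{m} for m ∈ ℤ is interpreted via the binomial series (valid since f has constant term 1). -/

import Mathlib

open MvPowerSeries Finset

section Twist
variable {σ : Type*} [DecidableEq σ] {R : Type*} [CommRing R]

noncomputable def twist (M : (σ →₀ ℕ) → MvPowerSeries σ R)
    (g : MvPowerSeries σ R) : MvPowerSeries σ R :=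
  fun d => ∑ p ∈ Finset.HasAntidiagonal.antidiagonal d,
    MvPowerSeries.coeff p.1 g * MvPowerSeries.coeff p.2 (M p.1)

lemma coeff_twist (M : (σ →₀ ℕ) → MvPowerSeries σ R) (g : MvPowerSeries σ R)
    (d : σ →₀ ℕ) :
    MvPowerSeries.coeff d (twist M g)
      = ∑ p ∈ Finset.HasAntidiagonal.antidiagonal d,
          MvPowerSeries.coeff p.1 g * MvPowerSeries.coeff p.2 (M p.1) := rfl

lemma twist_monomial (M : (σ →₀ ℕ) → MvPowerSeries σ R) (γ : σ →₀ ℕ) (a : R) :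
    twist M (MvPowerSeries.monomial γ a) = M γ * MvPowerSeries.monomial γ a := by
  ext d
  rw [coeff_twist, MvPowerSeries.coeff_mul_monomial]
  have h1 : ∀ p ∈ Finset.HasAntidiagonal.antidiagonal d,
      MvPowerSeries.coeff p.1 (MvPowerSeries.monomial γ a)
        * MvPowerSeries.coeff p.2 (M p.1)
      = if p.1 = γ then MvPowerSeries.coeff p.2 (M γ) * a else 0 := by
    intro p _
    rw [MvPowerSeries.coeff_monomial]
    split_ifs with h
    · subst h; ring
    · simp
  rw [Finset.sum_congr rfl h1, ← Finset.sum_filter]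
  have h2 : Finset.filter (fun p : (σ →₀ ℕ) × (σ →₀ ℕ) => p.1 = γ)
      (Finset.HasAntidiagonal.antidiagonal d) = if γ ≤ d then {(γ, d - γ)} else ∅ := by
    convert Finset.HasAntidiagonal.filter_fst_eq_antidiagonal d γ using 2
  rw [h2]
  split_ifs with h
  · simp
  · simp

lemma twist_add (M : (σ →₀ ℕ) → MvPowerSeries σ R) (g h : MvPowerSeries σ R) :
    twist M (g + h) = twist M g + twist M h := by
  ext d
  simp [coeff_twist, add_mul, Finset.sum_add_distrib]

lemma twist_mul (M : (σ →₀ ℕ) → MvPowerSeries σ R)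
    (hM : ∀ a b, M (a + b) = M a * M b) (g h : MvPowerSeries σ R) :
    twist M (g * h) = twist M g * twist M h := by
  ext d
  have L : MvPowerSeries.coeff d (twist M (g * h))
      = ∑ p ∈ Finset.HasAntidiagonal.antidiagonal d, ∑ ab ∈ Finset.HasAntidiagonal.antidiagonal p.1,
          ∑ st ∈ Finset.HasAntidiagonal.antidiagonal p.2,
            MvPowerSeries.coeff ab.1 g * MvPowerSeries.coeff st.1 (M ab.1)
              * (MvPowerSeries.coeff ab.2 h * MvPowerSeries.coeff st.2 (M ab.2)) := by
    rw [coeff_twist]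
    refine Finset.sum_congr rfl fun p _ => ?_
    rw [MvPowerSeries.coeff_mul, Finset.sum_mul]
    refine Finset.sum_congr rfl fun ab hab => ?_
    rw [Finset.HasAntidiagonal.mem_antidiagonal] at hab
    rw [show M p.1 = M ab.1 * M ab.2 by rw [← hab, hM], MvPowerSeries.coeff_mul,
      Finset.mul_sum]
    exact Finset.sum_congr rfl fun st _ => by ring
  have Rr : MvPowerSeries.coeff d (twist M g * twist M h)
      = ∑ p ∈ Finset.HasAntidiagonal.antidiagonal d, ∑ as ∈ Finset.HasAntidiagonal.antidiagonal p.1,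
          ∑ bt ∈ Finset.HasAntidiagonal.antidiagonal p.2,
            MvPowerSeries.coeff as.1 g * MvPowerSeries.coeff as.2 (M as.1)
              * (MvPowerSeries.coeff bt.1 h * MvPowerSeries.coeff bt.2 (M bt.1)) := by
    rw [MvPowerSeries.coeff_mul]
    refine Finset.sum_congr rfl fun p _ => ?_
    rw [coeff_twist, coeff_twist, Finset.sum_mul_sum]
  rw [L, Rr]
  simp only [Finset.sum_sigma']
  apply Finset.sum_nbij'
    (fun x => ⟨(x.2.1.1 + x.2.2.1, x.2.1.2 + x.2.2.2), (x.2.1.1, x.2.2.1), (x.2.1.2, x.2.2.2)⟩)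
    (fun x => ⟨(x.2.1.1 + x.2.2.1, x.2.1.2 + x.2.2.2), (x.2.1.1, x.2.2.1), (x.2.1.2, x.2.2.2)⟩)
  · rintro ⟨⟨p, q⟩, ⟨a, b⟩, ⟨s, t⟩⟩ hx
    simp only [Finset.mem_sigma, Finset.HasAntidiagonal.mem_antidiagonal] at hx ⊢
    obtain ⟨h1, h2, h3⟩ := hx
    refine ⟨?_, trivial, trivial⟩
    rw [← h1, ← h2, ← h3]; abel
  · rintro ⟨⟨p, q⟩, ⟨a, s⟩, ⟨b, t⟩⟩ hx
    simp only [Finset.mem_sigma, Finset.HasAntidiagonal.mem_antidiagonal] at hx ⊢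
    obtain ⟨h1, h2, h3⟩ := hx
    refine ⟨?_, trivial, trivial⟩
    rw [← h1, ← h2, ← h3]; abel
  · rintro ⟨⟨p, q⟩, ⟨a, b⟩, ⟨s, t⟩⟩ hx
    simp only [Finset.mem_sigma, Finset.HasAntidiagonal.mem_antidiagonal] at hx
    obtain ⟨h1, h2, h3⟩ := hx
    simp [← h2, ← h3]
  · rintro ⟨⟨p, q⟩, ⟨a, s⟩, ⟨b, t⟩⟩ hx
    simp only [Finset.mem_sigma, Finset.HasAntidiagonal.mem_antidiagonal] at hx
    obtain ⟨h1, h2, h3⟩ := hx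
    simp [← h2, ← h3]
  · rintro ⟨⟨p, q⟩, ⟨a, b⟩, ⟨s, t⟩⟩ _
    ring

lemma twist_twist (Mμ Mν : (σ →₀ ℕ) → MvPowerSeries σ R)
    (h1 : ∀ a, Mν a * Mμ a = 1)
    (h2 : ∀ a s, MvPowerSeries.coeff s (Mν a) ≠ 0 → Mμ (a + s) = Mμ a)
    (g : MvPowerSeries σ R) : twist Mμ (twist Mν g) = g := by
  ext d
  have L : MvPowerSeries.coeff d (twist Mμ (twist Mν g))
      = ∑ p ∈ Finset.HasAntidiagonal.antidiagonal d, ∑ as ∈ Finset.HasAntidiagonal.antidiagonal p.1,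
          MvPowerSeries.coeff as.1 g *
            (MvPowerSeries.coeff as.2 (Mν as.1) *
              MvPowerSeries.coeff p.2 (Mμ as.1)) := by
    rw [coeff_twist]
    refine Finset.sum_congr rfl fun p _ => ?_
    rw [coeff_twist, Finset.sum_mul]
    refine Finset.sum_congr rfl fun as has => ?_
    rw [Finset.HasAntidiagonal.mem_antidiagonal] at has
    by_cases hz : MvPowerSeries.coeff as.2 (Mν as.1) = 0
    · rw [hz]; ring
    · rw [show Mμ p.1 = Mμ as.1 by rw [← has]; exact h2 _ _ hz]; ring
  rw [L]
  have key : (∑ p ∈ Finset.HasAntidiagonal.antidiagonal d, ∑ as ∈ Finset.HasAntidiagonal.antidiagonal p.1,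
        MvPowerSeries.coeff as.1 g *
          (MvPowerSeries.coeff as.2 (Mν as.1) *
            MvPowerSeries.coeff p.2 (Mμ as.1)))
      = ∑ p ∈ Finset.HasAntidiagonal.antidiagonal d, ∑ sq ∈ Finset.HasAntidiagonal.antidiagonal p.2,
          MvPowerSeries.coeff p.1 g *
            (MvPowerSeries.coeff sq.1 (Mν p.1) *
              MvPowerSeries.coeff sq.2 (Mμ p.1)) := by
    simp only [Finset.sum_sigma']
    apply Finset.sum_nbij' (fun x => ⟨(x.2.1, x.2.2 + x.1.2), (x.2.2, x.1.2)⟩)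
      (fun x => ⟨(x.1.1 + x.2.1, x.2.2), (x.1.1, x.2.1)⟩)
    · rintro ⟨⟨p, q⟩, ⟨a, s⟩⟩ hx
      simp only [Finset.mem_sigma, Finset.HasAntidiagonal.mem_antidiagonal] at hx ⊢
      obtain ⟨ha, hb⟩ := hx
      refine ⟨?_, trivial⟩
      rw [← ha, ← hb]; abel
    · rintro ⟨⟨a, w⟩, ⟨s, q⟩⟩ hx
      simp only [Finset.mem_sigma, Finset.HasAntidiagonal.mem_antidiagonal] at hx ⊢
      obtain ⟨ha, hb⟩ := hx
      refine ⟨?_, trivial⟩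
      rw [← ha, ← hb]; abel
    · rintro ⟨⟨p, q⟩, ⟨a, s⟩⟩ hx
      simp only [Finset.mem_sigma, Finset.HasAntidiagonal.mem_antidiagonal] at hx
      obtain ⟨ha, hb⟩ := hx
      simp [← hb]
    · rintro ⟨⟨a, w⟩, ⟨s, q⟩⟩ hx
      simp only [Finset.mem_sigma, Finset.HasAntidiagonal.mem_antidiagonal] at hx
      obtain ⟨ha, hb⟩ := hx
      simp [← hb]
    · rintro ⟨⟨p, q⟩, ⟨a, s⟩⟩ _
      rfl
  rw [key]
  have step : ∀ p ∈ Finset.HasAntidiagonal.antidiagonal d,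
      (∑ sq ∈ Finset.HasAntidiagonal.antidiagonal p.2,
        MvPowerSeries.coeff p.1 g *
          (MvPowerSeries.coeff sq.1 (Mν p.1) *
            MvPowerSeries.coeff sq.2 (Mμ p.1)))
      = MvPowerSeries.coeff p.1 g *
          MvPowerSeries.coeff p.2 (1 : MvPowerSeries σ R) := by
    intro p _
    rw [← Finset.mul_sum, ← MvPowerSeries.coeff_mul, h1]
  rw [Finset.sum_congr rfl step, ← MvPowerSeries.coeff_mul, mul_one]

noncomputable def twistAlgHom (M : (σ →₀ ℕ) → MvPowerSeries σ R)
    (hM : ∀ a b, M (a + b) = M a * M b) (hM0 : M 0 = 1) :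
    MvPowerSeries σ R →ₐ[R] MvPowerSeries σ R where
  toFun := twist M
  map_one' := by
    rw [show (1 : MvPowerSeries σ R) = MvPowerSeries.monomial 0 1 by
        simp [MvPowerSeries.monomial_zero_eq_C_apply], twist_monomial, hM0]
    simp [MvPowerSeries.monomial_zero_eq_C_apply]
  map_mul' := twist_mul M hM
  map_zero' := by
    ext d; simp [coeff_twist]
  map_add' := twist_add M
  commutes' := by
    intro r
    show twist M (algebraMap R (MvPowerSeries σ R) r) = algebraMap R (MvPowerSeries σ R) r
    rw [MvPowerSeries.algebraMap_apply (σ := σ) (R := R) (A := R),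
      Algebra.algebraMap_self_apply, ← MvPowerSeries.monomial_zero_eq_C_apply,
      twist_monomial, hM0, one_mul]

end Twist

section Supp
variable {σ : Type*} [DecidableEq σ] {R : Type*} [CommRing R] (γ₀ : σ →₀ ℕ)

def SuppMul (g : MvPowerSeries σ R) : Prop :=
  ∀ d, MvPowerSeries.coeff d g ≠ 0 → ∃ k : ℕ, d = k • γ₀

lemma suppMul_one : SuppMul γ₀ (1 : MvPowerSeries σ R) := by
  intro d hd
  refine ⟨0, ?_⟩
  rw [zero_smul]
  by_contra h
  rw [MvPowerSeries.coeff_one, if_neg h] at hd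
  exact hd rfl

lemma suppMul_mul {g h : MvPowerSeries σ R} (hg : SuppMul γ₀ g) (hh : SuppMul γ₀ h) :
    SuppMul γ₀ (g * h) := by
  intro d hd
  rw [MvPowerSeries.coeff_mul] at hd
  obtain ⟨p, hp, hne⟩ := Finset.exists_ne_zero_of_sum_ne_zero hd
  rw [Finset.HasAntidiagonal.mem_antidiagonal] at hp
  obtain ⟨k1, hk1⟩ := hg p.1 (left_ne_zero_of_mul hne)
  obtain ⟨k2, hk2⟩ := hh p.2 (right_ne_zero_of_mul hne)
  exact ⟨k1 + k2, by rw [← hp, hk1, hk2, add_smul]⟩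

lemma suppMul_pow {g : MvPowerSeries σ R} (hg : SuppMul γ₀ g) (k : ℕ) :
    SuppMul γ₀ (g ^ k) := by
  induction k with
  | zero => simpa using suppMul_one γ₀
  | succ k ih => rw [pow_succ]; exact suppMul_mul γ₀ ih hg

lemma degree_add' (a b : σ →₀ ℕ) :
    Finsupp.degree (a + b) = Finsupp.degree a + Finsupp.degree b := by
  exact map_add _ _ _

lemma suppMul_inv (v : (MvPowerSeries σ R)ˣ)
    (hv : SuppMul γ₀ (v : MvPowerSeries σ R)) :
    SuppMul γ₀ ((↑v⁻¹ : MvPowerSeries σ R)) := by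
  have key : ∀ N : ℕ, ∀ d : σ →₀ ℕ, Finsupp.degree d < N →
      MvPowerSeries.coeff d (↑v⁻¹ : MvPowerSeries σ R) ≠ 0 → ∃ k : ℕ, d = k • γ₀ := by
    intro N
    induction N with
    | zero => intro d hd; omega
    | succ N ih =>
      intro d hd hne
      by_cases hd0 : d = 0
      · exact ⟨0, by simp [hd0]⟩
      have h1 : MvPowerSeries.coeff d ((v : MvPowerSeries σ R) * (↑v⁻¹ : MvPowerSeries σ R)) = 0 := by
        rw [Units.mul_inv, MvPowerSeries.coeff_one, if_neg hd0]
      rw [MvPowerSeries.coeff_mul] at h1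
      have hmem : ((0 : σ →₀ ℕ), d) ∈ Finset.HasAntidiagonal.antidiagonal d := by simp
      rw [← Finset.add_sum_erase _ _ hmem] at h1
      have hSne : ∑ p ∈ (Finset.HasAntidiagonal.antidiagonal d).erase (0, d),
          MvPowerSeries.coeff p.1 (v : MvPowerSeries σ R)
            * MvPowerSeries.coeff p.2 (↑v⁻¹ : MvPowerSeries σ R) ≠ 0 := by
        intro hS
        rw [hS, add_zero] at h1
        have hcc : MvPowerSeries.coeff 0 (↑v⁻¹ : MvPowerSeries σ R)
            * MvPowerSeries.coeff 0 (v : MvPowerSeries σ R) = 1 := by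
          have := congrArg (MvPowerSeries.coeff 0) (Units.inv_mul v)
          rwa [MvPowerSeries.coeff_mul, show Finset.HasAntidiagonal.antidiagonal (0 : σ →₀ ℕ) = {(0,0)} by
            simp [Finsupp.antidiagonal_zero], Finset.sum_singleton,
            MvPowerSeries.coeff_one, if_pos rfl] at this
        apply hne
        calc MvPowerSeries.coeff d (↑v⁻¹ : MvPowerSeries σ R)
            = (MvPowerSeries.coeff 0 (↑v⁻¹ : MvPowerSeries σ R)
                * MvPowerSeries.coeff 0 (v : MvPowerSeries σ R))
              * MvPowerSeries.coeff d (↑v⁻¹ : MvPowerSeries σ R) := by rw [hcc, one_mul]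
          _ = MvPowerSeries.coeff 0 (↑v⁻¹ : MvPowerSeries σ R)
              * (MvPowerSeries.coeff 0 (v : MvPowerSeries σ R)
                * MvPowerSeries.coeff d (↑v⁻¹ : MvPowerSeries σ R)) := by ring
          _ = 0 := by rw [h1, mul_zero]
      obtain ⟨p, hp, hpne⟩ := Finset.exists_ne_zero_of_sum_ne_zero hSne
      obtain ⟨hpne0d, hpad⟩ := Finset.mem_erase.mp hp
      rw [Finset.HasAntidiagonal.mem_antidiagonal] at hpad
      have hp1 : p.1 ≠ 0 := by
        intro h0
        apply hpne0d
        have : p.2 = d := by rw [← hpad, h0, zero_add]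
        exact Prod.ext h0 this
      obtain ⟨k1, hk1⟩ := hv p.1 (left_ne_zero_of_mul hpne)
      have hdegadd : Finsupp.degree p.1 + Finsupp.degree p.2 = Finsupp.degree d := by
        rw [← hpad, degree_add']
      have hdeg1 : Finsupp.degree p.1 ≠ 0 := fun h0 =>
        hp1 ((Finsupp.degree_eq_zero_iff p.1).mp h0)
      have hdeg2 : Finsupp.degree p.2 < N := by omega
      obtain ⟨k2, hk2⟩ := ih p.2 hdeg2 (right_ne_zero_of_mul hpne)
      exact ⟨k1 + k2, by rw [← hpad, hk1, hk2, add_smul]⟩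
  intro d hd
  exact key (Finsupp.degree d + 1) d (Nat.lt_succ_self _) hd

lemma suppMul_zpow (v : (MvPowerSeries σ R)ˣ)
    (hv : SuppMul γ₀ (v : MvPowerSeries σ R)) (k : ℤ) :
    SuppMul γ₀ ((↑(v ^ k) : MvPowerSeries σ R)) := by
  cases k with
  | ofNat m =>
      rw [Int.ofNat_eq_coe, zpow_natCast, Units.val_pow_eq_pow_val]
      exact suppMul_pow γ₀ hv m
  | negSucc m =>
      rw [zpow_negSucc, ← inv_pow, Units.val_pow_eq_pow_val]
      exact suppMul_pow γ₀ (suppMul_inv γ₀ v hv) (m + 1)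

end Supp

/-- Let `f ∈ ℚ[[ℕ^n]]` be a formal power series with constant term 1,
supported on multiples of a fixed primitive `γ₀ ∈ ℕ^n \ {0}`, and let `ω` be a
skew-symmetric form on `ℤ^n`. Then the map `z^γ ↦ f^{ω(γ₀, γ)} · z^γ` extends to a
well-defined ℚ-algebra automorphism of the completed monoid algebra
`ℚ[[ℕ^n]] = MvPowerSeries (Fin n) ℚ`, where the integer powers `f^m` are interpreted
via the unit `u` with `↑u = f` (which exists since `f` has constant term 1). -/
theorem wall_crossing_automorphism_exists
    (n : ℕ)
    (ω : (Fin n → ℤ) →ₗ[ℤ] ((Fin n → ℤ) →ₗ[ℤ] ℤ))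
    (hskew : ∀ x y, ω x y = - ω y x)
    (γ₀ : Fin n →₀ ℕ) (hγ₀ : γ₀ ≠ 0)
    (hprim : ∀ d : ℕ, (∀ i, d ∣ γ₀ i) → d = 1)
    (f : MvPowerSeries (Fin n) ℚ)
    (hconst : MvPowerSeries.constantCoeff f = 1)
    (hsupp : ∀ d : Fin n →₀ ℕ, MvPowerSeries.coeff d f ≠ 0 → ∃ k : ℕ, d = k • γ₀)
    (u : (MvPowerSeries (Fin n) ℚ)ˣ) (hu : (u : MvPowerSeries (Fin n) ℚ) = f) :
    ∃ Φ : MvPowerSeries (Fin n) ℚ ≃ₐ[ℚ] MvPowerSeries (Fin n) ℚ,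
      ∀ γ : Fin n →₀ ℕ,
        Φ (MvPowerSeries.monomial (R := ℚ) γ 1)
          = (↑(u ^ (ω (fun i => (γ₀ i : ℤ)) (fun i => (γ i : ℤ)))) :
              MvPowerSeries (Fin n) ℚ) * MvPowerSeries.monomial (R := ℚ) γ 1 := by
  classical
  -- the additive exponent map
  set m : (Fin n →₀ ℕ) → ℤ :=
    fun γ => ω (fun i => (γ₀ i : ℤ)) (fun i => (γ i : ℤ)) with hm
  have hcast : ∀ a b : Fin n →₀ ℕ,
      (fun i => (((a + b) i : ℕ) : ℤ)) = (fun i => ((a i : ℕ) : ℤ)) + fun i => ((b i : ℕ) : ℤ) := by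
    intro a b
    funext i
    simp [Finsupp.add_apply]
  have hm_add : ∀ a b, m (a + b) = m a + m b := by
    intro a b
    simp only [hm, hcast a b, map_add]
  have hm0 : m 0 = 0 := by
    have : (fun i => (((0 : Fin n →₀ ℕ) i : ℕ) : ℤ)) = (0 : Fin n → ℤ) := by
      funext i; simp
    simp only [hm, this, map_zero]
  have hmγ₀ : m γ₀ = 0 := by
    have := hskew (fun i => (γ₀ i : ℤ)) (fun i => (γ₀ i : ℤ))
    simp only [hm]
    omega
  have hm_nsmul : ∀ k : ℕ, m (k • γ₀) = 0 := by
    intro k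
    have hc : (fun i => (((k • γ₀) i : ℕ) : ℤ)) = (k : ℤ) • fun i => ((γ₀ i : ℕ) : ℤ) := by
      funext i
      simp [Finsupp.smul_apply, mul_comm]
    simp only [hm] at hmγ₀ ⊢
    rw [hc, map_smul, hmγ₀, smul_zero]
  -- the twisting units
  set MU : (Fin n →₀ ℕ) → MvPowerSeries (Fin n) ℚ :=
    fun γ => ((u ^ m γ : (MvPowerSeries (Fin n) ℚ)ˣ) : MvPowerSeries (Fin n) ℚ) with hMU
  set MV : (Fin n →₀ ℕ) → MvPowerSeries (Fin n) ℚ :=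
    fun γ => ((u ^ (-m γ) : (MvPowerSeries (Fin n) ℚ)ˣ) : MvPowerSeries (Fin n) ℚ) with hMV
  have hMUadd : ∀ a b, MU (a + b) = MU a * MU b := by
    intro a b
    simp only [hMU, hm_add, zpow_add, Units.val_mul]
  have hMVadd : ∀ a b, MV (a + b) = MV a * MV b := by
    intro a b
    simp only [hMV, hm_add, neg_add, zpow_add, Units.val_mul]
  have hMU0 : MU 0 = 1 := by simp [hMU, hm0]
  have hMV0 : MV 0 = 1 := by simp [hMV, hm0]
  have hVU : ∀ a, MV a * MU a = 1 := by
    intro a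
    simp only [hMU, hMV, ← Units.val_mul, ← zpow_add, neg_add_cancel, zpow_zero, Units.val_one]
  have hUV : ∀ a, MU a * MV a = 1 := by
    intro a
    simp only [hMU, hMV, ← Units.val_mul, ← zpow_add, add_neg_cancel, zpow_zero, Units.val_one]
  -- support of the zpowers of u
  have hPu : SuppMul γ₀ (u : MvPowerSeries (Fin n) ℚ) := by
    rw [hu]; exact hsupp
  have hPz : ∀ k : ℤ, SuppMul γ₀ ((↑(u ^ k) : MvPowerSeries (Fin n) ℚ)) :=
    suppMul_zpow γ₀ u hPu
  have hstabU : ∀ a s, MvPowerSeries.coeff s (MV a) ≠ 0 → MU (a + s) = MU a := by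
    intro a s hs
    obtain ⟨k, hk⟩ := hPz (-m a) s hs
    simp only [hMU, hm_add, hk, hm_nsmul, add_zero]
  have hstabV : ∀ a s, MvPowerSeries.coeff s (MU a) ≠ 0 → MV (a + s) = MV a := by
    intro a s hs
    obtain ⟨k, hk⟩ := hPz (m a) s hs
    simp only [hMV, hm_add, hk, hm_nsmul, add_zero]
  -- the algebra homs
  refine ⟨AlgEquiv.ofAlgHom (twistAlgHom MU hMUadd hMU0) (twistAlgHom MV hMVadd hMV0)
      (AlgHom.ext fun g => twist_twist MU MV hVU hstabU g)
      (AlgHom.ext fun g => twist_twist MV MU hUV hstabV g), ?_⟩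
  intro γ
  show twist MU (MvPowerSeries.monomial (R := ℚ) γ 1) = _
  rw [twist_monomial]
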